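/- Let V be a real inner product space and let C ∈ V be a fixed vector. Define the bilinear multiplication X*Y = ⟨X,Y⟩C + ⟨X,C⟩Y on V. Then this operation is left-symmetric: As(X,Y,Z) = As(Y,X,Z) for all X, Y, Z ∈ V, where As(X,Y,Z) = (X*Y)*Z − X*(Y*Z). -/
import Mathlib


open RealInnerProductSpace

/-- On a real inner product space `V` with fixed vector `C`, the
multiplication `X*Y = ⟨X,Y⟩C + ⟨X,C⟩Y` is left-symmetric. -/
theorem stmt_11 {V : Type*} [NormedAddCommGroup V] [InnerProductSpace ℝ V]
    (C : V)
    (mul : V → V → V)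
    (hmul : ∀ X Y, mul X Y = ⟪X, Y⟫ • C + ⟪X, C⟫ • Y)
    (As : V → V → V → V)
    (hAs : ∀ X Y Z, As X Y Z = mul (mul X Y) Z - mul X (mul Y Z)) :
    ∀ X Y Z, As X Y Z = As Y X Z := by
  intro X Y Z
  simp only [hAs, hmul, inner_add_left, inner_add_right, inner_smul_left, inner_smul_right,
    smul_add, smul_smul, real_inner_comm X Y]
  simp only [RCLike.star_def, conj_trivial]
  module
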